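/- UPLA key lemma (semantic form): let Ψ = Π : φ be a DQBF, ℓ a literal, V' = dep(ℓ), and κ a literal such that every Skolem function of abs(Π : φ ∧ ℓ, V') makes κ constantly true. Then abs(Π : φ, V') ≡ abs(Π : φ ∧ (¬ℓ ∨ κ), V'). -/

import Mathlib

/- Formalization of DQBF (dependency quantified Boolean formulas),
   Skolem-function semantics, abstraction, and clause operations. -/

attribute [local instance] Classical.propDecidable

namespace DQBFPaper

/-- An assignment of Boolean values to the variables. -/
abbrev Assignment (V : Type) := V → Bool

/-- A DQBF over variables `V`: the variables in `exVars` are existential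
    (with dependency sets given by `dep`), the others are universal;
    `matrix` is the quantifier-free part. -/
structure DQBF (V : Type) where
  exVars : Set V
  dep : V → Set V
  matrix : Assignment V → Prop

/-- A literal: a variable together with a polarity (`true` = positive). -/
abbrev Lit (V : Type) := V × Bool

/-- Evaluation of a literal under an assignment. -/
def Lit.eval {V : Type} (a : Assignment V) (l : Lit V) : Bool :=
  if l.2 then a l.1 else !a l.1

/-- Negation of a literal. -/
def Lit.neg {V : Type} (l : Lit V) : Lit V := (l.1, !l.2)

/-- A clause: a set of literals (interpreted disjunctively). -/
abbrev Clause (V : Type) := Set (Lit V)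

/-- A clause is true iff some literal in it is true. -/
def Clause.eval {V : Type} (a : Assignment V) (C : Clause V) : Prop :=
  ∃ l ∈ C, Lit.eval a l = true

/-- A clause is non-tautological if no variable occurs with both polarities. -/
def NonTaut {V : Type} (C : Clause V) : Prop :=
  ∀ v : V, ¬((v, true) ∈ C ∧ (v, false) ∈ C)

namespace DQBF

variable {V : Type}

/-- The universal variables of a DQBF. -/
def univVars (Ψ : DQBF V) : Set V := Ψ.exVarsᶜ

/-- Well-formedness: dependency sets of existential variables consist of
    universal variables only. -/
def WellFormed (Ψ : DQBF V) : Prop :=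
  ∀ y ∈ Ψ.exVars, Ψ.dep y ⊆ Ψ.exVarsᶜ

/-- Substituting candidate Skolem functions `s` for the existential variables,
    given an assignment `a` of the universal variables. -/
noncomputable def subst (Ψ : DQBF V) (s : V → Assignment V → Bool)
    (a : Assignment V) : Assignment V :=
  fun v => if v ∈ Ψ.exVars then s v a else a v

/-- `s` respects the dependency sets: the value of each existential variable
    only depends on the assignment of its dependency set. -/
def Respects (Ψ : DQBF V) (s : V → Assignment V → Bool) : Prop :=
  ∀ y ∈ Ψ.exVars, ∀ a b : Assignment V, (∀ x ∈ Ψ.dep y, a x = b x) → s y a = s y b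

/-- `s` is a Skolem function for `Ψ`: it respects the dependencies and
    substituting it turns the matrix into a tautology. -/
def IsSkolem (Ψ : DQBF V) (s : V → Assignment V → Bool) : Prop :=
  Ψ.Respects s ∧ ∀ a : Assignment V, Ψ.matrix (Ψ.subst s a)

/-- A DQBF is satisfiable iff it has a Skolem function. -/
def Satisfiable (Ψ : DQBF V) : Prop := ∃ s, Ψ.IsSkolem s

/-- Two DQBFs (over the same prefix) are equivalent iff they have exactly the
    same Skolem functions. -/
def Equivalent (Ψ₁ Ψ₂ : DQBF V) : Prop := ∀ s, Ψ₁.IsSkolem s ↔ Ψ₂.IsSkolem s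

/-- Equi-satisfiability. -/
def EquiSat (Ψ₁ Ψ₂ : DQBF V) : Prop := Ψ₁.Satisfiable ↔ Ψ₂.Satisfiable

/-- Abstraction w.r.t. a set `V'` of universal variables: each variable of `V'`
    becomes existential with empty dependency set (and is removed from all
    dependency sets); the matrix is unchanged. -/
noncomputable def abst (Ψ : DQBF V) (V' : Set V) : DQBF V where
  exVars := Ψ.exVars ∪ V'
  dep := fun v => if v ∈ V' then ∅ else Ψ.dep v \ V'
  matrix := Ψ.matrix

/-- Conjoin a clause to the matrix. -/
def addClause (Ψ : DQBF V) (C : Clause V) : DQBF V :=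
  { Ψ with matrix := fun a => Ψ.matrix a ∧ Clause.eval a C }

/-- Conjoin the negation of a clause (i.e. the unit clauses negating each of
    its literals) to the matrix. -/
def addNegClause (Ψ : DQBF V) (C : Clause V) : DQBF V :=
  { Ψ with matrix := fun a => Ψ.matrix a ∧ ∀ l ∈ C, Lit.eval a l = false }

/-- Generalized dependencies: `dep v = {v}` for universal `v`,
    `dep v = D_v` for existential `v`. -/
noncomputable def depVar (Ψ : DQBF V) (v : V) : Set V :=
  if v ∈ Ψ.exVars then Ψ.dep v else {v}

/-- Dependencies of a literal. -/
noncomputable def depLit (Ψ : DQBF V) (l : Lit V) : Set V := Ψ.depVar l.1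

/-- Dependencies of a clause. -/
noncomputable def depClause (Ψ : DQBF V) (C : Clause V) : Set V :=
  ⋃ l ∈ C, Ψ.depLit l

/-- Under the Skolem candidate `s`, the literal `l` is constantly true,
    i.e. true for every assignment of the universal variables. -/
noncomputable def ConstTrue (Ψ : DQBF V) (s : V → Assignment V → Bool)
    (l : Lit V) : Prop :=
  ∀ a : Assignment V, Lit.eval (Ψ.subst s a) l = true

/-- A DQBF with a CNF matrix given by a set of clauses. -/
def mkCNF (exVars : Set V) (dep : V → Set V) (φ : Set (Clause V)) : DQBF V :=
  ⟨exVars, dep, fun a => ∀ C ∈ φ, Clause.eval a C⟩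

/-- Universal reduction of a clause: remove every universal literal on which
    no existential literal of the clause depends. -/
def urClause (Ψ : DQBF V) (C : Clause V) : Clause V :=
  C \ {l | l.1 ∉ Ψ.exVars ∧ ∀ k ∈ C, k.1 ∈ Ψ.exVars → l.1 ∉ Ψ.dep k.1}

/-- Outer variables of an existential variable `v`. -/
noncomputable def ovEx (Ψ : DQBF V) (v : V) : Set V :=
  {w | Ψ.depVar w ⊆ Ψ.depVar v}

/-- The kernel of a universal variable `v`. -/
def kernel (Ψ : DQBF V) (v : V) : Set V :=
  ⋂ y ∈ {y | y ∈ Ψ.exVars ∧ v ∈ Ψ.dep y}, Ψ.dep y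

/-- Outer variables of a universal variable `v`. -/
def ovUniv (Ψ : DQBF V) (v : V) : Set V :=
  Ψ.kernel v ∪ {y | y ∈ Ψ.exVars ∧ v ∉ Ψ.dep y ∧ Ψ.dep y ⊆ Ψ.kernel v}

/-- The outer clause of `D` w.r.t. a set of outer variables. -/
def OC (D : Clause V) (OV : Set V) : Clause V := {k ∈ D | k.1 ∈ OV}

/-- Outer resolvent for an existential pivot literal `l ∈ C`. -/
noncomputable def orEx (Ψ : DQBF V) (C D : Clause V) (l : Lit V) : Clause V :=
  C ∪ (OC D (Ψ.ovEx l.1) \ {Lit.neg l})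

/-- Outer resolvent for a universal pivot literal `l ∈ C`. -/
def orUniv (Ψ : DQBF V) (C D : Clause V) (l : Lit V) : Clause V :=
  (C \ {l}) ∪ OC D (Ψ.ovUniv l.1)

/-- Outer resolvent (case split on the quantifier type of the pivot). -/
noncomputable def orRes (Ψ : DQBF V) (C D : Clause V) (l : Lit V) : Clause V :=
  if l.1 ∈ Ψ.exVars then Ψ.orEx C D l else Ψ.orUniv C D l

end DQBF

end DQBFPaper

namespace DQBFPaper
open DQBF

/-- UPLA key lemma: with `V' = dep(ℓ)`, if every Skolem function
of `abs(Π : φ ∧ ℓ, V')` makes the literal `κ` constantly true, then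
`abs(Π : φ, V') ≡ abs(Π : φ ∧ (¬ℓ ∨ κ), V')`. -/
theorem upla_key_lemma {V : Type} (Ψ : DQBF V) (l κ : Lit V)
    (hwf : Ψ.WellFormed)
    (h : ∀ s, ((Ψ.addClause {l}).abst (Ψ.depLit l)).IsSkolem s →
      ((Ψ.addClause {l}).abst (Ψ.depLit l)).ConstTrue s κ) :
    (Ψ.abst (Ψ.depLit l)).Equivalent
      ((Ψ.addClause {Lit.neg l, κ}).abst (Ψ.depLit l)) := by
  set V' := Ψ.depLit l with hV'
  have hmem : l.1 ∈ Ψ.exVars ∪ V' := by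
    by_cases hx : l.1 ∈ Ψ.exVars
    · exact Or.inl hx
    · refine Or.inr ?_
      simp [hV', DQBF.depLit, DQBF.depVar, hx]
  have hdep : (Ψ.abst V').dep l.1 = ∅ := by
    by_cases hx : l.1 ∈ Ψ.exVars
    · have hV'eq : V' = Ψ.dep l.1 := by simp [hV', DQBF.depLit, DQBF.depVar, hx]
      by_cases hv : l.1 ∈ V'
      · simp [DQBF.abst, hv]
      · simp [DQBF.abst, hv, hV'eq]
    · have hv : l.1 ∈ V' := by simp [hV', DQBF.depLit, DQBF.depVar, hx]
      simp [DQBF.abst, hv]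
  intro s
  have hsubst : ∀ a : Assignment V, ((Ψ.abst V').subst s a) l.1 = s l.1 a := by
    intro a
    simp only [DQBF.subst, DQBF.abst]
    exact if_pos hmem
  constructor
  · rintro ⟨hr, hm⟩
    have hconst : ∀ a b : Assignment V, s l.1 a = s l.1 b := by
      intro a b
      refine hr l.1 hmem a b ?_
      intro x hx
      rw [hdep] at hx
      exact absurd hx (Set.notMem_empty x)
    refine ⟨hr, fun a => ⟨hm a, ?_⟩⟩
    by_cases hc : Lit.eval ((Ψ.abst V').subst s a) l = true
    · have hlall : ∀ b : Assignment V,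
          Lit.eval ((Ψ.abst V').subst s b) l = true := by
        intro b
        have heq : Lit.eval ((Ψ.abst V').subst s b) l
            = Lit.eval ((Ψ.abst V').subst s a) l := by
          simp only [Lit.eval, hsubst]
          rw [hconst b a]
        rw [heq, hc]
      have hsk : ((Ψ.addClause {l}).abst V').IsSkolem s :=
        ⟨hr, fun b => ⟨hm b, ⟨l, rfl, hlall b⟩⟩⟩
      have hκ := h s hsk a
      exact ⟨κ, Or.inr rfl, hκ⟩
    · refine ⟨Lit.neg l, Or.inl rfl, ?_⟩
      simp only [Lit.eval, Lit.neg] at hc ⊢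
      rcases Bool.eq_false_or_eq_true l.2 with hl2 | hl2 <;> simp [hl2] at hc ⊢ <;> exact hc
  · rintro ⟨hr, hm⟩
    exact ⟨hr, fun a => (hm a).1⟩

end DQBFPaper
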